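/- In the setting of the iterated central amalgamation: if S is a non-trivial subnormal subgroup of G, then every term S^(n) of the derived series of S is non-trivial; in particular, S is not soluble. -/

import Mathlib

universe u

/-- The subgroup `D` of `G` is the free product of its subgroups `A` and `C` with
amalgamated central subgroup `B`: the cocone of inclusions satisfies the universal
property of the pushout of the two inclusions `B → A` and `B → C`. -/
structure IsCentralAmalgamIn {G : Type u} [Group G] (A C B D : Subgroup G) : Prop where
  A_le : A ≤ D
  C_le : C ≤ D
  B_le_A : B ≤ A
  B_le_C : B ≤ C
  central_A : ∀ b ∈ B, ∀ a ∈ A, b * a = a * b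
  central_C : ∀ b ∈ B, ∀ c ∈ C, b * c = c * b
  isPushout : ∀ (K : Type u) [Group K] (f : ↥A →* K) (g : ↥C →* K),
      (∀ (b : G) (hb : b ∈ B), f ⟨b, B_le_A hb⟩ = g ⟨b, B_le_C hb⟩) →
      ∃! φ : ↥D →* K,
        φ.comp (Subgroup.inclusion A_le) = f ∧ φ.comp (Subgroup.inclusion C_le) = g

/-- The setting of the iterated central amalgamation
`G = ⋃_n (H₀ *_{B₀} H₁ *_{B₁} ⋯ *_{B_{n-1}} H_n)`:
`B₀ ⊇ B₁ ⊇ ⋯` is a descending sequence of groups with `⋂_n B_n = 1`; for each `n`,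
`B_n` is a central subgroup of both `H_n` and `H_{n+1}` with `B_n ≠ H_n` and
`B_n ≠ H_{n+1}`; `G₀ = H₀`, `G_{n+1} = G_n *_{B_n} H_{n+1}` (free product with central
amalgamation) and `G = ⋃_n G_n`.  All groups are realized as subgroups of `G`. -/
structure IteratedAmalgam (G : Type u) [Group G] where
  Gn : ℕ → Subgroup G
  Hn : ℕ → Subgroup G
  Bn : ℕ → Subgroup G
  B_antitone : ∀ n, Bn (n + 1) ≤ Bn n
  B_iInf : ⨅ n, Bn n = ⊥
  B_le_H : ∀ n, Bn n ≤ Hn n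
  B_le_H_succ : ∀ n, Bn n ≤ Hn (n + 1)
  B_central_H : ∀ n, ∀ b ∈ Bn n, ∀ h ∈ Hn n, b * h = h * b
  B_central_H_succ : ∀ n, ∀ b ∈ Bn n, ∀ h ∈ Hn (n + 1), b * h = h * b
  B_ne_H : ∀ n, Bn n ≠ Hn n
  B_ne_H_succ : ∀ n, Bn n ≠ Hn (n + 1)
  G_zero : Gn 0 = Hn 0
  amalgam : ∀ n, IsCentralAmalgamIn (Gn n) (Hn (n + 1)) (Bn n) (Gn (n + 1))
  iSup_G : ⨆ n, Gn n = ⊤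

/-- A subgroup `H` of `G` is *spread out* if `H ⊄ G_n` for every `n`. -/
def IteratedAmalgam.SpreadOut {G : Type u} [Group G] (S : IteratedAmalgam G)
    (H : Subgroup G) : Prop :=
  ∀ n : ℕ, ¬ H ≤ S.Gn n

/-- `S` is a subnormal subgroup of `H`: there is a finite chain
`S = c 0 ⊴ c 1 ⊴ ⋯ ⊴ c m = H` of successive normal subgroups. -/
def Subnormal {G : Type u} [Group G] (S H : Subgroup G) : Prop :=
  ∃ (m : ℕ) (c : ℕ → Subgroup G), c 0 = S ∧ c m = H ∧
    ∀ i < m, c i ≤ c (i + 1) ∧ ∀ g ∈ c (i + 1), ∀ x ∈ c i, g * x * g⁻¹ ∈ c i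

/-- The derived series of a subgroup: `T^(0) = T` and `T^(n+1) = ⁅T^(n), T^(n)⁆`. -/
def derivedSeriesOf {G : Type u} [Group G] (T : Subgroup G) : ℕ → Subgroup G
  | 0 => T
  | n + 1 => ⁅derivedSeriesOf T n, derivedSeriesOf T n⁆



section PushoutAux

open Monoid PushoutI Function List

section PushoutAux

variable {B A C : Type u} [Group A] [Group B] [Group C]

private def Fac2 (A C : Type u) : Bool → Type u
  | true => A
  | false => C

private instance fac2Group : ∀ b, Group (Fac2 A C b)
  | true => ‹Group A›
  | false => ‹Group C›

private def fam2 (fA : B →* A) (fC : B →* C) : ∀ b, B →* Fac2 A C b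
  | true => fA
  | false => fC

variable (fA : B →* A) (fC : B →* C)

private def prodK (L : List (Σ b, Fac2 A C b)) : PushoutI (fam2 fA fC) :=
  (L.map fun p => Monoid.PushoutI.of (φ := fam2 fA fC) p.1 p.2).prod

private lemma prodK_append (L1 L2 : List (Σ b, Fac2 A C b)) :
    prodK fA fC (L1 ++ L2) = prodK fA fC L1 * prodK fA fC L2 := by
  simp [prodK]

private lemma prodK_cons (p : Σ b, Fac2 A C b) (L : List (Σ b, Fac2 A C b)) :
    prodK fA fC (p :: L) =
      Monoid.PushoutI.of (φ := fam2 fA fC) p.1 p.2 * prodK fA fC L := by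
  simp [prodK]

private lemma prodK_ne_one (hA : Function.Injective fA) (hC : Function.Injective fC)
    (L : List (Σ b, Fac2 A C b)) (hne : L ≠ [])
    (hchain : L.Chain' (fun p q => p.1 ≠ q.1))
    (hred : ∀ p ∈ L, p.2 ∉ (fam2 fA fC p.1).range) :
    prodK fA fC L ≠ 1 := by
  intro h1
  have hinj : ∀ b, Function.Injective (fam2 fA fC b) := by
    intro b; cases b
    · exact hC
    · exact hA
  have hne1 : ∀ p ∈ L, p.2 ≠ (1 : Fac2 A C p.1) := by
    intro p hp h
    exact hred p hp (h ▸ one_mem _)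
  let w : CoprodI.Word (Fac2 A C) := ⟨L, hne1, hchain⟩
  have hwred : Monoid.PushoutI.Reduced (fam2 fA fC) w := hred
  have hprod : ofCoprodI w.prod = prodK fA fC L := by
    show ofCoprodI (List.prod (L.map fun l => CoprodI.of l.snd)) = _
    rw [map_list_prod, List.map_map]
    rfl
  have hempty := hwred.eq_empty_of_mem_range hinj
    (by rw [hprod, h1]; exact one_mem _)
  have : L = [] := congrArg CoprodI.Word.toList hempty
  exact hne this

private lemma bool_chain_step (bl : List Bool) (h1 : bl.Chain' (· ≠ ·))
    (h2 : bl.head? = some false) (h3 : bl.getLast? = some false) :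
    (bl ++ true :: bl.reverse).Chain' (· ≠ ·) ∧
      (bl ++ true :: bl.reverse).head? = some false ∧
      (bl ++ true :: bl.reverse).getLast? = some false := by
  have hbl : bl ≠ [] := by rintro rfl; simp at h2
  refine ⟨?_, ?_, ?_⟩
  · rw [List.Chain', List.isChain_append]
    refine ⟨h1, ?_, ?_⟩
    · rw [List.isChain_cons]
      constructor
      · intro y hy
        rw [List.head?_reverse, h3] at hy
        simp at hy
        simp [hy]
      · rw [List.isChain_reverse]
        exact h1.imp fun {a b} h => Ne.symm h
    · intro x hx y hy
      rw [h3] at hx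
      simp at hx hy
      simp [hx, ← hy]
  · rw [List.head?_append_of_ne_nil _ hbl, h2]
  · rw [List.getLast?_append_of_ne_nil _ (by simp), List.getLast?_cons,
      List.getLast?_reverse, h2]
    rfl

private lemma pushout_commSeq_ne_one (hA : Function.Injective fA)
    (hC : Function.Injective fC)
    {a : A} (ha : a ∉ fA.range) {c : C} (hc : c ∉ fC.range)
    (d : ℕ → PushoutI (fam2 fA fC))
    (hd0 : d 0 = Monoid.PushoutI.of (φ := fam2 fA fC) false c)
    (hdrec : ∀ k, d (k + 1) = d k * Monoid.PushoutI.of (φ := fam2 fA fC) true a * (d k)⁻¹ *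
      (Monoid.PushoutI.of (φ := fam2 fA fC) true a)⁻¹) :
    ∀ k, d (k + 1) ≠ 1 := by
  set u := Monoid.PushoutI.of (φ := fam2 fA fC) true a with hu
  set v := Monoid.PushoutI.of (φ := fam2 fA fC) false c with hv
  have hrange : ∀ (b : Bool) (x : Fac2 A C b), x ∉ (fam2 fA fC b).range →
      x⁻¹ ∉ (fam2 fA fC b).range := by
    intro b x hx h
    exact hx (by simpa using (fam2 fA fC b).range.inv_mem h)
  have inv : ∀ k, ∃ M : List (Σ b, Fac2 A C b),
      (M.map Sigma.fst).Chain' (· ≠ ·) ∧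
      (M.map Sigma.fst).head? = some false ∧
      (M.map Sigma.fst).getLast? = some false ∧
      (∀ p ∈ M, p.2 ∉ (fam2 fA fC p.1).range) ∧
      d (k + 1) = prodK fA fC M * u⁻¹ := by
    intro k
    induction k with
    | zero =>
      refine ⟨[⟨false, c⟩, ⟨true, a⟩, ⟨false, c⁻¹⟩], ?_, rfl, rfl, ?_, ?_⟩
      · simp [List.Chain']
      · intro p hp
        simp only [List.mem_cons, List.not_mem_nil, or_false] at hp
        rcases hp with rfl | rfl | rfl
        · exact hc
        · exact ha
        · exact hrange false c hc
      · rw [hdrec 0, hd0]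
        simp only [prodK, List.map_cons, List.map_nil, List.prod_cons, List.prod_nil]
        rw [show Monoid.PushoutI.of (φ := fam2 fA fC) false c⁻¹ = v⁻¹ from map_inv _ c]
        rw [← hv, ← hu]
        group
    | succ k ih =>
      obtain ⟨M, hch, hh, hl, hred, hprod⟩ := ih
      have hmap : ((M ++ (⟨true, a⟩ : Σ b, Fac2 A C b) ::
          (M.map fun p => (⟨p.1, p.2⁻¹⟩ : Σ b, Fac2 A C b)).reverse).map Sigma.fst)
          = (M.map Sigma.fst) ++ true :: (M.map Sigma.fst).reverse := by
        simp [List.map_reverse, List.map_map, Function.comp_def]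
      obtain ⟨c1, c2, c3⟩ := bool_chain_step _ hch hh hl
      refine ⟨M ++ ⟨true, a⟩ :: (M.map fun p => ⟨p.1, p.2⁻¹⟩).reverse,
        by rw [hmap]; exact c1, by rw [hmap]; exact c2, by rw [hmap]; exact c3, ?_, ?_⟩
      · intro p hp
        simp only [List.mem_append, List.mem_cons, List.mem_reverse, List.mem_map] at hp
        rcases hp with hp | rfl | ⟨q, hq, rfl⟩
        · exact hred p hp
        · exact ha
        · exact hrange q.1 q.2 (hred q hq)
      · have hfun : ((fun p : Σ b, Fac2 A C b =>
            Monoid.PushoutI.of (φ := fam2 fA fC) p.1 p.2) ∘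
              fun p : Σ b, Fac2 A C b => (⟨p.1, p.2⁻¹⟩ : Σ b, Fac2 A C b)) =
            (fun x => x⁻¹) ∘ fun p : Σ b, Fac2 A C b =>
              Monoid.PushoutI.of (φ := fam2 fA fC) p.1 p.2 := by
          funext p
          exact map_inv _ _
        have hrev : prodK fA fC ((M.map fun p => ⟨p.1, p.2⁻¹⟩).reverse) =
            (prodK fA fC M)⁻¹ := by
          simp only [prodK]
          rw [List.map_reverse, List.map_map, hfun, ← List.map_map, ← List.prod_inv_reverse]
        rw [hdrec (k + 1), hprod, prodK_append, prodK_cons, hrev, ← hu]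
        group
  intro k h1
  obtain ⟨M, hch, hh, hl, hred, hprod⟩ := inv k
  have hMne : M ≠ [] := by
    rintro rfl; simp at hh
  refine prodK_ne_one fA fC hA hC (M ++ [⟨true, a⁻¹⟩]) (by simp) ?_ ?_ ?_
  · rw [List.Chain', ← List.isChain_map Sigma.fst (R := (· ≠ ·))]
    rw [List.map_append]
    rw [List.isChain_append]
    refine ⟨hch, by simp, ?_⟩
    intro x hx y hy
    rw [hl] at hx
    simp at hx hy
    simp [hx, hy]
  · intro p hp
    simp only [List.mem_append, List.mem_singleton] at hp
    rcases hp with hp | rfl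
    · exact hred p hp
    · exact hrange true a ha
  · have hsing : prodK fA fC [⟨true, a⁻¹⟩] = u⁻¹ := by
      simp only [prodK, List.map_cons, List.map_nil, List.prod_cons, List.prod_nil, mul_one]
      exact map_inv _ _
    rw [prodK_append, hsing, ← hprod]
    exact h1

end PushoutAux

private lemma amalgam_commSeq_ne_one {G : Type u} [Group G] {A C B D : Subgroup G}
    (am : IsCentralAmalgamIn A C B D) {t h : G} (htA : t ∈ A) (htB : t ∉ B)
    (hhC : h ∈ C) (hhB : h ∉ B) (e : ℕ → G) (he0 : e 0 = h)
    (herec : ∀ k, e (k + 1) = e k * t * (e k)⁻¹ * t⁻¹) :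
    ∀ k, e (k + 1) ≠ 1 := by
  classical
  set fA : ↥B →* ↥A := (Subgroup.inclusion am.B_le_A : ↥B →* ↥A)
  set fC : ↥B →* ↥C := (Subgroup.inclusion am.B_le_C : ↥B →* ↥C)
  let K := Monoid.PushoutI (fam2 fA fC)
  let f : ↥A →* K := Monoid.PushoutI.of (φ := fam2 fA fC) true
  let g : ↥C →* K := Monoid.PushoutI.of (φ := fam2 fA fC) false
  have hcompat : ∀ (b : G) (hb : b ∈ B), f ⟨b, am.B_le_A hb⟩ = g ⟨b, am.B_le_C hb⟩ := by
    intro b hb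
    have h1 : f (fA ⟨b, hb⟩) = Monoid.PushoutI.base (fam2 fA fC) ⟨b, hb⟩ :=
      Monoid.PushoutI.of_apply_eq_base (fam2 fA fC) true ⟨b, hb⟩
    have h2 : g (fC ⟨b, hb⟩) = Monoid.PushoutI.base (fam2 fA fC) ⟨b, hb⟩ :=
      Monoid.PushoutI.of_apply_eq_base (fam2 fA fC) false ⟨b, hb⟩
    exact h1.trans h2.symm
  obtain ⟨Ψ, ⟨hΨA, hΨC⟩, -⟩ := am.isPushout K f g hcompat
  have hmemA : t ∈ D := am.A_le htA
  have hmem : ∀ k, e k ∈ D := by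
    intro k
    induction k with
    | zero => rw [he0]; exact am.C_le hhC
    | succ k ih =>
      rw [herec]
      exact mul_mem (mul_mem (mul_mem ih hmemA) (inv_mem ih)) (inv_mem hmemA)
  set u : K := Monoid.PushoutI.of (φ := fam2 fA fC) true (⟨t, htA⟩ : ↥A) with hu
  have hΨt : Ψ ⟨t, hmemA⟩ = u := by
    have := congrArg (fun F => F (⟨t, htA⟩ : ↥A)) hΨA
    exact this
  have hd0 : Ψ ⟨e 0, hmem 0⟩ = Monoid.PushoutI.of (φ := fam2 fA fC) false (⟨h, hhC⟩ : ↥C) := by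
    have h1 : (⟨e 0, hmem 0⟩ : ↥D) = Subgroup.inclusion am.C_le ⟨h, hhC⟩ :=
      Subtype.ext he0
    rw [h1]
    exact congrArg (fun F => F (⟨h, hhC⟩ : ↥C)) hΨC
  have hdrec : ∀ k, Ψ ⟨e (k + 1), hmem (k + 1)⟩ =
      Ψ ⟨e k, hmem k⟩ * u * (Ψ ⟨e k, hmem k⟩)⁻¹ * u⁻¹ := by
    intro k
    have h1 : (⟨e (k + 1), hmem (k + 1)⟩ : ↥D) =
        ⟨e k, hmem k⟩ * ⟨t, hmemA⟩ * (⟨e k, hmem k⟩ : ↥D)⁻¹ * (⟨t, hmemA⟩ : ↥D)⁻¹ :=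
      Subtype.ext (herec k)
    rw [h1, map_mul, map_mul, map_mul, map_inv, map_inv, hΨt]
  have hta : (⟨t, htA⟩ : ↥A) ∉ fA.range := by
    rintro ⟨⟨b, hb⟩, hEq⟩
    have : b = t := congrArg Subtype.val hEq
    exact htB (this ▸ hb)
  have hhc : (⟨h, hhC⟩ : ↥C) ∉ fC.range := by
    rintro ⟨⟨b, hb⟩, hEq⟩
    have : b = h := congrArg Subtype.val hEq
    exact hhB (this ▸ hb)
  have hinjA : Function.Injective fA := Subgroup.inclusion_injective _
  have hinjC : Function.Injective fC := Subgroup.inclusion_injective _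
  have hne := pushout_commSeq_ne_one fA fC hinjA hinjC hta hhc
    (fun k => Ψ ⟨e k, hmem k⟩) hd0 hdrec
  intro k hk
  apply hne k
  show Ψ ⟨e (k + 1), hmem (k + 1)⟩ = 1
  have h2 : (⟨e (k + 1), hmem (k + 1)⟩ : ↥D) = 1 := Subtype.ext hk
  rw [h2, map_one]

variable {G : Type u} [Group G]

open scoped commutatorElement

private lemma commSub_le (K : Subgroup G) : ⁅K, K⁆ ≤ K := by
  rw [Subgroup.commutator_le]
  intro g₁ h₁ g₂ h₂
  exact mul_mem (mul_mem (mul_mem h₁ h₂) (inv_mem h₁)) (inv_mem h₂)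

private lemma conj_mem_commSub {K : Subgroup G} {g x : G} (hg : g ∈ K)
    (hx : x ∈ ⁅K, K⁆) : g * x * g⁻¹ ∈ ⁅K, K⁆ := by
  have hxK : x ∈ K := commSub_le K hx
  have h1 : ⁅g, x⁆ ∈ ⁅K, K⁆ := Subgroup.commutator_mem_commutator hg hxK
  have h2 : g * x * g⁻¹ = ⁅g, x⁆ * x := by
    rw [commutatorElement_def]; group
  rw [h2]
  exact mul_mem h1 hx

private lemma derivedSeriesOf_succ_le {T : Subgroup G} (n : ℕ) :
    derivedSeriesOf T (n + 1) ≤ derivedSeriesOf T n :=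
  commSub_le _

/-- the derived series of a subnormal subgroup is subnormal -/
private lemma subnormal_derivedSeriesOf {T : Subgroup G} (hT : Subnormal T ⊤) (j : ℕ) :
    Subnormal (derivedSeriesOf T j) ⊤ := by
  obtain ⟨m, c, hc0, hcm, hstep⟩ := hT
  refine ⟨m + j, fun i => if i ≤ j then derivedSeriesOf T (j - i) else c (i - j), ?_, ?_, ?_⟩
  · simp
  · by_cases hm : m + j ≤ j
    · have hm0 : m = 0 := by omega
      have : T = ⊤ := by rw [← hc0]; exact hm0 ▸ hcm
      simp [hm, this, show j - (m + j) = 0 by omega, derivedSeriesOf]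
    · simp [hm, show m + j - j = m by omega, hcm]
  · intro i hi
    have hglue : ∀ i', j ≤ i' → (if i' ≤ j then derivedSeriesOf T (j - i') else c (i' - j))
        = c (i' - j) := by
      intro i' hi'
      by_cases h : i' ≤ j
      · have : i' = j := le_antisymm h hi'
        simp [this, derivedSeriesOf, hc0]
      · simp [h]
    by_cases h1 : i + 1 ≤ j
    · have hji : j - i = (j - (i + 1)) + 1 := by omega
      simp only [show i ≤ j by omega, if_pos, h1, hji]
      exact ⟨derivedSeriesOf_succ_le _,
        fun g hg x hx => conj_mem_commSub hg hx⟩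
    · have hji : j ≤ i := by omega
      simp only [hglue i hji, hglue (i + 1) (by omega)]
      simp only [show i + 1 - j = (i - j) + 1 by omega]
      exact hstep (i - j) (by omega)

/-- iterated commutators with an element of the subnormal subgroup land in it -/
private lemma chain_mem {T : Subgroup G} {m : ℕ} {c : ℕ → Subgroup G}
    (hc0 : c 0 = T) (hcm : c m = ⊤)
    (hstep : ∀ i < m, c i ≤ c (i + 1) ∧ ∀ g ∈ c (i + 1), ∀ x ∈ c i, g * x * g⁻¹ ∈ c i)
    {t : G} (ht : t ∈ T) (e : ℕ → G)
    (herec : ∀ k, e (k + 1) = e k * t * (e k)⁻¹ * t⁻¹) :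
    e m ∈ T := by
  have hmono : ∀ i ≤ m, c 0 ≤ c i := by
    intro i
    induction i with
    | zero => intro _; exact le_rfl
    | succ i ih => intro hii; exact (ih (by omega)).trans (hstep i (by omega)).1
  have main : ∀ k ≤ m, e k ∈ c (m - k) := by
    intro k
    induction k with
    | zero => intro _; simp [hcm]
    | succ k ih =>
      intro hk
      have hlt : m - (k + 1) < m := by omega
      have heq : m - k = (m - (k + 1)) + 1 := by omega
      have hek : e k ∈ c ((m - (k + 1)) + 1) := by rw [← heq]; exact ih (by omega)
      have htc : t ∈ c (m - (k + 1)) := hmono _ (by omega) (hc0.symm ▸ ht)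
      have h1 : e k * t * (e k)⁻¹ ∈ c (m - (k + 1)) :=
        (hstep _ hlt).2 (e k) hek t htc
      rw [herec]
      exact mul_mem h1 (inv_mem htc)
  have := main m le_rfl
  simpa [hc0] using this

private lemma step_nonabelian {G : Type u} [Group G] (S : IteratedAmalgam G)
    {T : Subgroup G} (hT : Subnormal T ⊤) (hTbot : T ≠ ⊥) : ⁅T, T⁆ ≠ ⊥ := by
  intro hcomm
  obtain ⟨t, htT, ht1⟩ : ∃ t ∈ T, t ≠ 1 := by
    by_contra hfa
    push_neg at hfa
    exact hTbot ((Subgroup.eq_bot_iff_forall T).mpr hfa)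
  have hGmono : Monotone S.Gn := monotone_nat_of_le_succ fun n => (S.amalgam n).A_le
  have hdir : Directed (· ≤ ·) S.Gn := hGmono.directed_le
  have htG : t ∈ ⨆ n, S.Gn n := by rw [S.iSup_G]; trivial
  obtain ⟨N, htN⟩ := (Subgroup.mem_iSup_of_directed hdir).mp htG
  obtain ⟨n₀, hn₀⟩ : ∃ n, t ∉ S.Bn n := by
    by_contra hfa
    push_neg at hfa
    have h2 : t ∈ ⨅ n, S.Bn n := Subgroup.mem_iInf.mpr hfa
    rw [S.B_iInf] at h2
    exact ht1 h2
  have hBanti : Antitone S.Bn := antitone_nat_of_succ_le S.B_antitone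
  set n := max N n₀ with hn
  have htGn : t ∈ S.Gn n := hGmono (le_max_left _ _) htN
  have htBn : t ∉ S.Bn n := fun hmem => hn₀ (hBanti (le_max_right _ _) hmem)
  obtain ⟨h, hhH, hhB⟩ : ∃ h ∈ S.Hn (n + 1), h ∉ S.Bn n := by
    by_contra hfa
    push_neg at hfa
    exact S.B_ne_H_succ n (le_antisymm (S.B_le_H_succ n) hfa)
  obtain ⟨m, c, hc0, hcm, hstep'⟩ := hT
  let e : ℕ → G := fun k => Nat.rec h (fun _ ek => ek * t * ek⁻¹ * t⁻¹) k
  have he0 : e 0 = h := rfl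
  have herec : ∀ k, e (k + 1) = e k * t * (e k)⁻¹ * t⁻¹ := fun k => rfl
  have hem : e m ∈ T := chain_mem hc0 hcm hstep' htT e herec
  have hcommel : e (m + 1) ∈ ⁅T, T⁆ := by
    have h2 : ⁅e m, t⁆ ∈ ⁅T, T⁆ := Subgroup.commutator_mem_commutator hem htT
    rw [commutatorElement_def] at h2
    rw [herec]
    exact h2
  have hone : e (m + 1) = 1 := by
    rw [hcomm] at hcommel
    simpa using hcommel
  exact amalgam_commSeq_ne_one (S.amalgam n) htGn htBn hhH hhB e he0 herec m hone

/-- If `T` is a non-trivial subnormal subgroup of `G`, then every term `T^(n)` of the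
derived series of `T` is non-trivial; in particular, `T` is not soluble. -/
theorem derivedSeries_ne_bot_of_subnormal {G : Type u} [Group G]
    (S : IteratedAmalgam G) (T : Subgroup G) (hT : Subnormal T ⊤) (hTbot : T ≠ ⊥) :
    (∀ n : ℕ, derivedSeriesOf T n ≠ ⊥) ∧ ¬ IsSolvable ↥T := by
  have main : ∀ n, derivedSeriesOf T n ≠ ⊥ := by
    intro n
    induction n with
    | zero => exact hTbot
    | succ n ih =>
      exact step_nonabelian S (subnormal_derivedSeriesOf hT n) ih
  refine ⟨main, ?_⟩
  intro hsolv
  obtain ⟨n, hn⟩ := hsolv.solvable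
  have hmap : ∀ k, (derivedSeries ↥T k).map T.subtype = derivedSeriesOf T k := by
    intro k
    induction k with
    | zero =>
      show ((⊤ : Subgroup ↥T).map T.subtype) = T
      rw [← MonoidHom.range_eq_map, Subgroup.range_subtype]
    | succ k ih =>
      rw [derivedSeries_succ, Subgroup.map_commutator, ih]
      rfl
  apply main n
  rw [← hmap n, hn]
  exact Subgroup.map_bot _
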